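/- For 0 < a ≤ ℓ/2, the bilinear form ⟨ζ,η⟩_a = ∫∫ (a - d(x,y))₊ dζ(x) dη(y) on signed counting measures on the circle S is symmetric and positive semidefinite; in particular ⟨ζ,ζ⟩_a ≥ 0 for every finite signed measure ζ on S. -/

import Mathlib

open MeasureTheory Set


lemma lemA (ℓ a w : ℝ) (hℓ : 0 < ℓ) (ha : 0 < a) (haℓ : a ≤ ℓ / 2)
    (hw1 : -ℓ < w) (hw2 : w < ℓ) :
    max (a - ‖(w : AddCircle ℓ)‖) 0
      = max (a - |w|) 0 + max (a - |w - ℓ|) 0 + max (a - |w + ℓ|) 0 := by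
  have hℓ' : ℓ⁻¹ > 0 := inv_pos.2 hℓ
  rw [AddCircle.norm_eq]
  rcases lt_or_ge w (-(ℓ/2)) with h1 | h1
  · have hb1 : ℓ⁻¹ * w < -(1/2) := by
      rw [show -(1/2 : ℝ) = ℓ⁻¹ * (-(ℓ/2)) by field_simp]
      exact (mul_lt_mul_iff_right₀ hℓ').2 h1
    have hb2 : -1 < ℓ⁻¹ * w := by
      rw [show (-1 : ℝ) = ℓ⁻¹ * (-ℓ) by field_simp]
      exact (mul_lt_mul_iff_right₀ hℓ').2 hw1
    have hr : round (ℓ⁻¹ * w) = -1 := by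
      rw [round_eq]
      exact Int.floor_eq_iff.2 ⟨by push_cast; linarith, by push_cast; linarith⟩
    rw [hr]
    have e1 : |w| = -w := abs_of_neg (by linarith)
    have e2 : |w - ℓ| = -(w - ℓ) := abs_of_neg (by linarith)
    have e3 : |w + ℓ| = w + ℓ := abs_of_nonneg (by linarith)
    have e0 : |w - (-1 : ℤ) * ℓ| = w + ℓ := by
      push_cast
      rw [abs_of_nonneg (by linarith)]
      ring
    rw [e0, e1, e2, e3]
    have z1 : max (a - -w) 0 = 0 := max_eq_right (by linarith)
    have z2 : max (a - -(w - ℓ)) 0 = 0 := max_eq_right (by linarith)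
    rw [z1, z2]; ring
  · rcases lt_or_ge w (ℓ/2) with h2 | h2
    · have hb1 : ℓ⁻¹ * w < 1/2 := by
        rw [show (1/2 : ℝ) = ℓ⁻¹ * (ℓ/2) by field_simp]
        exact (mul_lt_mul_iff_right₀ hℓ').2 h2
      have hb2 : -(1/2) ≤ ℓ⁻¹ * w := by
        rw [show -(1/2 : ℝ) = ℓ⁻¹ * (-(ℓ/2)) by field_simp]
        exact (mul_le_mul_iff_right₀ hℓ').2 h1
      have hr : round (ℓ⁻¹ * w) = 0 := by
        rw [round_eq]
        exact Int.floor_eq_iff.2 ⟨by push_cast; linarith, by push_cast; linarith⟩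
      rw [hr]
      have e2 : |w - ℓ| = -(w - ℓ) := abs_of_neg (by linarith)
      have e3 : |w + ℓ| = w + ℓ := abs_of_nonneg (by linarith)
      have e0 : |w - (0 : ℤ) * ℓ| = |w| := by push_cast; ring_nf
      rw [e0, e2, e3]
      have z1 : max (a - -(w - ℓ)) 0 = 0 := max_eq_right (by linarith)
      have z2 : max (a - (w + ℓ)) 0 = 0 := max_eq_right (by linarith)
      rw [z1, z2]; ring
    · have hb1 : (1/2 : ℝ) ≤ ℓ⁻¹ * w := by
        rw [show (1/2 : ℝ) = ℓ⁻¹ * (ℓ/2) by field_simp]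
        exact (mul_le_mul_iff_right₀ hℓ').2 h2
      have hb2 : ℓ⁻¹ * w < 1 := by
        rw [show (1 : ℝ) = ℓ⁻¹ * ℓ by field_simp]
        exact (mul_lt_mul_iff_right₀ hℓ').2 hw2
      have hr : round (ℓ⁻¹ * w) = 1 := by
        rw [round_eq]
        exact Int.floor_eq_iff.2 ⟨by push_cast; linarith, by push_cast; linarith⟩
      rw [hr]
      have e1 : |w| = w := abs_of_nonneg (by linarith)
      have e2 : |w - ℓ| = -(w - ℓ) := abs_of_neg (by linarith)
      have e3 : |w + ℓ| = w + ℓ := abs_of_nonneg (by linarith)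
      have e0 : |w - (1 : ℤ) * ℓ| = -(w - ℓ) := by
        push_cast
        rw [abs_of_nonpos (by linarith)]
        ring
      rw [e0, e1, e2, e3]
      have z1 : max (a - w) 0 = 0 := max_eq_right (by linarith)
      have z2 : max (a - (w + ℓ)) 0 = 0 := max_eq_right (by linarith)
      rw [z1, z2]; ring


noncomputable def box (c r : ℝ) : ℝ → ℝ := (Set.Ioc (c - r) (c + r)).indicator 1

lemma box_integrable (c r : ℝ) : Integrable (box c r) := by
  rw [box, integrable_indicator_iff measurableSet_Ioc]
  exact integrableOn_const measure_Ioc_lt_top.ne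

lemma box_meas (c r : ℝ) : Measurable (box c r) :=
  (measurable_const.indicator measurableSet_Ioc)

lemma box_nonneg (c r u : ℝ) : 0 ≤ box c r u :=
  Set.indicator_nonneg (fun _ _ => zero_le_one) u

lemma box_le_one (c r u : ℝ) : box c r u ≤ 1 := by
  rw [box]
  by_cases h : u ∈ Set.Ioc (c - r) (c + r) <;> simp [Set.indicator_apply, h]

lemma box_eq_zero {c r u : ℝ} (h : u ∉ Set.Ioc (c - r) (c + r)) : box c r u = 0 :=
  Set.indicator_of_notMem h _

lemma box_shift (c r t u : ℝ) : box c r (u - t) = box (c + t) r u := by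
  simp only [box, Set.indicator_apply, Set.mem_Ioc, Pi.one_apply]
  have : (c - r < u - t ∧ u - t ≤ c + r) ↔ (c + t - r < u ∧ u ≤ c + t + r) := by
    constructor <;> (rintro ⟨h1, h2⟩; exact ⟨by linarith, by linarith⟩)
  exact if_congr this rfl rfl

lemma box_mul (c d r : ℝ) :
    (fun u => box c r u * box d r u)
      = (Set.Ioc (max (c - r) (d - r)) (min (c + r) (d + r))).indicator 1 := by
  funext u
  simp only [box]
  rw [← Set.Ioc_inter_Ioc]
  have := Set.inter_indicator_mul (f := (1 : ℝ → ℝ)) (g := (1 : ℝ → ℝ))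
    (s := Set.Ioc (c - r) (c + r)) (t := Set.Ioc (d - r) (d + r)) u
  simpa [Pi.one_def] using this.symm

lemma box_mul_integrable (c d r : ℝ) : MeasureTheory.Integrable (fun u => box c r u * box d r u) := by
  rw [box_mul, MeasureTheory.integrable_indicator_iff measurableSet_Ioc]
  exact MeasureTheory.integrableOn_const measure_Ioc_lt_top.ne

lemma integral_box_mul (c d r : ℝ) :
    ∫ u, box c r u * box d r u = max (2 * r - |c - d|) 0 := by
  rw [box_mul, MeasureTheory.integral_indicator_one measurableSet_Ioc, Real.volume_real_Ioc]
  rcases le_total c d with h | h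
  · rw [abs_of_nonpos (by linarith : c - d ≤ 0),
      min_eq_left (show c + r ≤ d + r by linarith),
      max_eq_right (show c - r ≤ d - r by linarith)]
    ring_nf
  · rw [abs_of_nonneg (by linarith : (0:ℝ) ≤ c - d),
      min_eq_right (show d + r ≤ c + r by linarith),
      max_eq_left (show d - r ≤ c - r by linarith)]
    ring_nf

theorem key {α : Type*} (L a : ℝ) (hL : 0 < L) (ha : 0 < a) (haL : a ≤ L / 2)
    (s : Finset α) (c : α → ℝ) (p : α → ℝ) (hp : ∀ x ∈ s, p x ∈ Set.Ico (0:ℝ) L) :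
    0 ≤ ∑ x ∈ s, ∑ y ∈ s, c x * c y *
      (max (a - |p x - p y|) 0 + max (a - |p x - p y - L|) 0 + max (a - |p x - p y + L|) 0) := by
  set r : ℝ := a / 2 with hrdef
  have hr0 : 0 < r := by rw [hrdef]; linarith
  have hrL : r ≤ L / 4 := by rw [hrdef]; linarith
  set f : ℝ → ℝ := fun u => ∑ x ∈ s, c x * box (p x) r u with hf
  set g : ℝ → ℝ := fun u => f (u - L) + f u + f (u + L) with hg
  -- basic facts about f
  have hfint : Integrable f := by
    rw [hf]; exact integrable_finset_sum _ fun x _ => (box_integrable _ _).const_mul _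
  have hfmeas : Measurable f := by
    rw [hf]; exact Finset.measurable_sum _ fun x _ => ((box_meas _ _).const_mul _)
  set C : ℝ := ∑ x ∈ s, |c x| with hC
  have hfbd : ∀ u, ‖f u‖ ≤ C := by
    intro u
    rw [hf, hC]
    refine (norm_sum_le _ _).trans (Finset.sum_le_sum fun x _ => ?_)
    rw [Real.norm_eq_abs, abs_mul, abs_of_nonneg (box_nonneg _ _ _)]
    nlinarith [box_le_one (p x) r u, box_nonneg (p x) r u, abs_nonneg (c x)]
  have hsupp : ∀ u : ℝ, f u ≠ 0 → u ∈ Set.Ioc (-r) (L + r) := by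
    intro u hu
    by_contra hmem
    apply hu
    rw [hf]
    refine Finset.sum_eq_zero fun x hx => ?_
    rw [box_eq_zero, mul_zero]
    intro ⟨h1, h2⟩
    obtain ⟨hp1, hp2⟩ := hp x hx
    exact hmem ⟨by linarith, by linarith⟩
  have hI : ∀ c₁ c₂ : ℝ, Integrable (fun u => f (u + c₁) * f (u + c₂)) := by
    intro c₁ c₂
    have h2 : Integrable (fun u => f (u + c₂)) := hfint.comp_add_right c₂
    exact h2.bdd_mul ((hfmeas.comp (measurable_add_const c₁)).aestronglyMeasurable)
      (Filter.Eventually.of_forall fun u => hfbd _)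
  have hIg : ∀ t : ℝ, Integrable (fun u => g u * f (u + t)) := by
    intro t
    have h1 := ((hI (-L) t).add (hI 0 t)).add (hI L t)
    refine h1.congr (Filter.Eventually.of_forall fun u => ?_)
    simp only [Pi.add_apply, hg, add_zero]
    rw [show u + -L = u - L by ring]
    ring
  have hIh : Integrable (fun u => f u * g u) := by
    have := hIg 0
    refine this.congr (Filter.Eventually.of_forall fun u => ?_)
    simp only [add_zero]; ring
  have hzero2 : ∀ v : ℝ, f v * f (v + 2*L) = 0 := by
    intro v
    by_cases h1 : f v = 0
    · rw [h1, zero_mul]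
    by_cases h2 : f (v + 2*L) = 0
    · rw [h2, mul_zero]
    obtain ⟨hv1, hv2⟩ := hsupp v h1
    obtain ⟨hw1, hw2⟩ := hsupp _ h2
    linarith
  have hzero2' : ∀ v : ℝ, f v * f (v - 2*L) = 0 := by
    intro v
    by_cases h1 : f v = 0
    · rw [h1, zero_mul]
    by_cases h2 : f (v - 2*L) = 0
    · rw [h2, mul_zero]
    obtain ⟨hv1, hv2⟩ := hsupp v h1
    obtain ⟨hw1, hw2⟩ := hsupp _ h2
    linarith
  have hsq : 0 ≤ ∫ u in (0:ℝ)..L, (g u)^2 :=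
    intervalIntegral.integral_nonneg (le_of_lt hL) (fun u _ => sq_nonneg _)
  have hIgm : Integrable (fun u => g u * f (u - L)) :=
    (hIg (-L)).congr (Filter.Eventually.of_forall fun u => by
      show g u * f (u + -L) = g u * f (u - L)
      rw [show u + -L = u - L by ring])
  have hIg0 : Integrable (fun u => g u * f u) :=
    (hIg 0).congr (Filter.Eventually.of_forall fun u => by
      show g u * f (u + 0) = g u * f u
      rw [add_zero])
  have hexpand : ∫ u in (0:ℝ)..L, (g u)^2
      = (∫ u in (0:ℝ)..L, g u * f (u - L)) + (∫ u in (0:ℝ)..L, g u * f u)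
        + (∫ u in (0:ℝ)..L, g u * f (u + L)) := by
    have e : EqOn (fun u => (g u)^2)
        (fun u => g u * f (u - L) + g u * f u + g u * f (u + L)) (Set.uIcc (0:ℝ) L) := by
      intro u _
      simp only [hg]
      ring
    rw [intervalIntegral.integral_congr e,
      intervalIntegral.integral_add (hIgm.intervalIntegrable.add hIg0.intervalIntegrable)
        (hIg L).intervalIntegrable,
      intervalIntegral.integral_add hIgm.intervalIntegrable hIg0.intervalIntegrable]
  have shiftR : ∫ u in (0:ℝ)..L, g u * f (u + L) = ∫ v in L..(2*L), g (v - L) * f v := by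
    have h := intervalIntegral.integral_comp_add_right (a := 0) (b := L)
      (f := fun v => g (v - L) * f v) L
    simp only [add_sub_cancel_right] at h
    rw [show (0:ℝ)+L = L by ring, show L+L = 2*L by ring] at h
    exact h
  have shiftL : ∫ u in (0:ℝ)..L, g u * f (u - L) = ∫ v in (-L)..0, g (v + L) * f v := by
    have h := intervalIntegral.integral_comp_add_right (a := 0) (b := L)
      (f := fun v => g (v + L) * f v) (-L)
    simp only [neg_add_cancel_right] at h
    rw [show (0:ℝ) + -L = -L by ring, show L + -L = 0 by ring] at h
    rw [← h]
    refine intervalIntegral.integral_congr fun u _ => ?_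
    rw [show u + -L = u - L by ring]
  have congR : ∫ v in L..(2*L), g (v - L) * f v = ∫ v in L..(2*L), f v * g v := by
    refine intervalIntegral.integral_congr fun v hv => ?_
    rw [Set.uIcc_of_le (by linarith : L ≤ 2*L)] at hv
    obtain ⟨hv1, hv2⟩ := hv
    have e2 : f v * f (v - 2*L) = 0 := hzero2' v
    have e3 : f (v + L) = 0 := by
      by_contra h
      obtain ⟨h1, h2⟩ := hsupp _ h
      linarith
    have egm : g (v - L) = f (v - 2*L) + f (v - L) + f v := by
      simp only [hg]
      rw [show v - L - L = v - 2*L by ring, show v - L + L = v by ring]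
    have egv : g v = f (v - L) + f v + f (v + L) := by simp only [hg]
    rw [egm, egv, e3]
    linear_combination e2
  have congL : ∫ v in (-L)..0, g (v + L) * f v = ∫ v in (-L)..0, f v * g v := by
    refine intervalIntegral.integral_congr fun v hv => ?_
    rw [Set.uIcc_of_le (by linarith : -L ≤ 0)] at hv
    obtain ⟨hv1, hv2⟩ := hv
    have e2 : f v * f (v + 2*L) = 0 := hzero2 v
    have e3 : f (v - L) = 0 := by
      by_contra h
      obtain ⟨h1, h2⟩ := hsupp _ h
      linarith
    have egp : g (v + L) = f v + f (v + L) + f (v + 2*L) := by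
      simp only [hg]
      rw [show v + L - L = v by ring, show v + L + L = v + 2*L by ring]
    have egv : g v = f (v - L) + f v + f (v + L) := by simp only [hg]
    rw [egp, egv, e3]
    linear_combination e2
  have congM : ∫ u in (0:ℝ)..L, g u * f u = ∫ u in (0:ℝ)..L, f u * g u :=
    intervalIntegral.integral_congr fun u _ => mul_comm _ _
  have adj1 : (∫ v in (-L)..0, f v * g v) + (∫ v in (0:ℝ)..L, f v * g v)
      = ∫ v in (-L)..L, f v * g v :=
    intervalIntegral.integral_add_adjacent_intervals hIh.intervalIntegrable
      hIh.intervalIntegrable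
  have adj2 : (∫ v in (-L)..L, f v * g v) + (∫ v in L..(2*L), f v * g v)
      = ∫ v in (-L)..(2*L), f v * g v :=
    intervalIntegral.integral_add_adjacent_intervals hIh.intervalIntegrable
      hIh.intervalIntegrable
  have hfull : ∫ v in (-L)..(2*L), f v * g v = ∫ v, f v * g v := by
    rw [intervalIntegral.integral_of_le (by linarith : (-L) ≤ 2*L)]
    apply setIntegral_eq_integral_of_forall_compl_eq_zero
    intro v hv
    by_cases h1 : f v = 0
    · rw [h1, zero_mul]
    · obtain ⟨h2, h3⟩ := hsupp v h1
      exact absurd ⟨by linarith, by linarith⟩ hv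
  have hpos : 0 ≤ ∫ v, f v * g v := by
    calc (0:ℝ) ≤ ∫ u in (0:ℝ)..L, (g u)^2 := hsq
    _ = (∫ u in (0:ℝ)..L, g u * f (u - L)) + (∫ u in (0:ℝ)..L, g u * f u)
        + (∫ u in (0:ℝ)..L, g u * f (u + L)) := hexpand
    _ = (∫ v in (-L)..0, f v * g v) + (∫ u in (0:ℝ)..L, f u * g u)
        + (∫ v in L..(2*L), f v * g v) := by rw [shiftR, shiftL, congR, congL, congM]
    _ = ∫ v, f v * g v := by linarith [adj1, adj2, hfull]
  have hbox3int : ∀ cx cy : ℝ, Integrable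
      (fun u => box cx r u * (box cy r u + box (cy + L) r u + box (cy - L) r u)) := by
    intro cx cy
    have h1 := ((box_mul_integrable cx cy r).add (box_mul_integrable cx (cy + L) r)).add
      (box_mul_integrable cx (cy - L) r)
    refine h1.congr (Filter.Eventually.of_forall fun u => ?_)
    simp only [Pi.add_apply]
    ring
  have hbox3 : ∀ cx cy : ℝ,
      (∫ u, box cx r u * (box cy r u + box (cy + L) r u + box (cy - L) r u))
        = max (a - |cx - cy|) 0 + max (a - |cx - cy - L|) 0 + max (a - |cx - cy + L|) 0 := by
    intro cx cy
    simp_rw [mul_add]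
    have iab : Integrable (fun u => box cx r u * box cy r u + box cx r u * box (cy + L) r u) :=
      (box_mul_integrable cx cy r).add (box_mul_integrable cx (cy + L) r)
    rw [integral_add iab (box_mul_integrable cx (cy - L) r),
      integral_add (box_mul_integrable cx cy r) (box_mul_integrable cx (cy + L) r),
      integral_box_mul, integral_box_mul, integral_box_mul]
    rw [show 2 * r = a by rw [hrdef]; ring, show cx - (cy + L) = cx - cy - L by ring,
      show cx - (cy - L) = cx - cy + L by ring]
  have hA : ∑ x ∈ s, ∑ y ∈ s, c x * c y *
      (max (a - |p x - p y|) 0 + max (a - |p x - p y - L|) 0 + max (a - |p x - p y + L|) 0)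
      = ∫ u, f u * g u := by
    have step1 : ∀ x ∈ s, ∀ y ∈ s, c x * c y *
        (max (a - |p x - p y|) 0 + max (a - |p x - p y - L|) 0 + max (a - |p x - p y + L|) 0)
        = ∫ u, c x * c y *
          (box (p x) r u * (box (p y) r u + box (p y + L) r u + box (p y - L) r u)) := by
      intro x _ y _
      rw [integral_const_mul, hbox3]
    rw [Finset.sum_congr rfl (fun x hx => Finset.sum_congr rfl fun y hy => step1 x hx y hy)]
    rw [Finset.sum_congr rfl (fun x _ =>
      (integral_finset_sum s fun y _ => ((hbox3int (p x) (p y)).const_mul _)).symm)]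
    rw [← integral_finset_sum s fun x _ =>
      integrable_finset_sum s fun y _ => ((hbox3int (p x) (p y)).const_mul _)]
    congr 1
    funext u
    have e1 : f (u - L) = ∑ y ∈ s, c y * box (p y + L) r u := by
      simp only [hf]
      exact Finset.sum_congr rfl fun y _ => by rw [box_shift]
    have e2 : f (u + L) = ∑ y ∈ s, c y * box (p y - L) r u := by
      simp only [hf]
      refine Finset.sum_congr rfl fun y _ => ?_
      rw [show u + L = u - (-L) by ring, box_shift, show p y + -L = p y - L by ring]
    simp only [hg]
    rw [e1, e2]
    simp only [hf]
    rw [← Finset.sum_add_distrib, ← Finset.sum_add_distrib, Finset.sum_mul_sum]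
    refine Finset.sum_congr rfl fun x _ => Finset.sum_congr rfl fun y _ => ?_
    ring
  rw [hA]
  exact hpos


open Finset

/-- The bilinear form `⟨ζ,η⟩ₐ = ∑∑ ζ(x) η(y) (a - d(x,y))₊` on finite signed combinations of
Dirac measures on the circle of circumference `ℓ`. -/
noncomputable def ipa (ℓ : ℝ) (a : ℝ) (ζ η : AddCircle ℓ →₀ ℝ) : ℝ :=
  ∑ x ∈ ζ.support, ∑ y ∈ η.support, ζ x * η y * max (a - dist x y) 0

/-- For `0 < a ≤ ℓ/2`, the form `⟨·,·⟩ₐ` is symmetric and positive semidefinite. -/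
theorem ipa_symm_and_posSemidef (ℓ : ℝ) [Fact (0 < ℓ)] (a : ℝ) (ha : 0 < a)
    (haℓ : a ≤ ℓ / 2) :
    (∀ ζ η : AddCircle ℓ →₀ ℝ, ipa ℓ a ζ η = ipa ℓ a η ζ) ∧
    (∀ ζ : AddCircle ℓ →₀ ℝ, 0 ≤ ipa ℓ a ζ ζ) := by
  constructor
  · intro ζ η
    rw [ipa, ipa, Finset.sum_comm]
    exact Finset.sum_congr rfl fun y _ => Finset.sum_congr rfl fun x _ => by
      rw [dist_comm]; ring
  · intro ζ
    have hℓ : 0 < ℓ := Fact.out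
    set rep : AddCircle ℓ → ℝ := fun x => ((QuotientAddGroup.equivIcoMod hℓ 0 x :
      Set.Ico (0:ℝ) (0 + ℓ)) : ℝ) with hrep
    have hmem : ∀ x : AddCircle ℓ, rep x ∈ Set.Ico (0:ℝ) ℓ := by
      intro x
      have := (QuotientAddGroup.equivIcoMod hℓ 0 x).2
      simpa using this
    have hcoe : ∀ x : AddCircle ℓ, ((rep x : ℝ) : AddCircle ℓ) = x := fun x =>
      (QuotientAddGroup.equivIcoMod hℓ 0).symm_apply_apply x
    have hterm : ∀ x ∈ ζ.support, ∀ y ∈ ζ.support,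
        ζ x * ζ y * max (a - dist x y) 0
          = ζ x * ζ y * (max (a - |rep x - rep y|) 0 + max (a - |rep x - rep y - ℓ|) 0
            + max (a - |rep x - rep y + ℓ|) 0) := by
      intro x _ y _
      congr 1
      have hw1 : -ℓ < rep x - rep y := by
        have h1 := (hmem x).1; have h2 := (hmem y).2; linarith
      have hw2 : rep x - rep y < ℓ := by
        have h1 := (hmem x).2; have h2 := (hmem y).1; linarith
      have hd : dist x y = ‖((rep x - rep y : ℝ) : AddCircle ℓ)‖ := by
        rw [AddCircle.coe_sub, hcoe, hcoe, ← dist_eq_norm]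
      rw [hd]
      exact lemA ℓ a (rep x - rep y) hℓ ha haℓ hw1 hw2
    rw [ipa, Finset.sum_congr rfl (fun x hx => Finset.sum_congr rfl fun y hy =>
      hterm x hx y hy)]
    exact key ℓ a hℓ ha haℓ ζ.support ζ rep (fun x _ => hmem x)
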